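/- Let p be a prime and d a natural number with d ≥ p. Then the p-adic valuation of the binomial coefficient C(d, p) equals the p-adic valuation of ⌊d/p⌋. -/

import Mathlib

theorem padicValNat_choose_p (p d : ℕ) (hp : p.Prime) (hd : p ≤ d) :
    padicValNat p (d.choose p) = padicValNat p (d / p) := by
  haveI : Fact p.Prime := ⟨hp⟩
  set m := d / p with hm
  set r := d % p with hr
  have hrp : r < p := Nat.mod_lt _ hp.pos
  have hm1 : 1 ≤ m := (Nat.one_le_div_iff hp.pos).mpr hd
  have hdeq : d = p * m + r := (Nat.div_add_mod d p).symm
  have hpm1 : p * (m - 1) = p * m - p := by rw [Nat.mul_sub, mul_one]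
  have hpmp : p ≤ p * m := Nat.le_mul_of_pos_right p (by omega)
  -- v(d!) = v(m!) + m
  have h1 : padicValNat p d.factorial = padicValNat p m.factorial + m := by
    rw [← padicValNat_mul_div_factorial (p := p) d, ← hm, padicValNat_factorial_mul]
  -- (d - p) / p = m - 1
  have hdp : (d - p) / p = m - 1 := by
    have : d - p = p * (m - 1) + r := by rw [hpm1]; omega
    rw [this, Nat.mul_add_div hp.pos, Nat.div_eq_of_lt hrp, add_zero]
  -- v((d-p)!) = v((m-1)!) + (m-1)
  have h2 : padicValNat p (d - p).factorial
      = padicValNat p (m - 1).factorial + (m - 1) := by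
    rw [← padicValNat_mul_div_factorial (p := p) (d - p), hdp, padicValNat_factorial_mul]
  -- v(p!) = 1
  have h3 : padicValNat p p.factorial = 1 := by
    have hfac : p * (p - 1).factorial = p.factorial := Nat.mul_factorial_pred hp.pos.ne'
    have hz : padicValNat p (p - 1).factorial = 0 := by
      rw [padicValNat_factorial (b := 1) (by
        simpa using Nat.log_eq_zero_iff.mpr (Or.inl (by omega)))]
      simp
    rw [← hfac, padicValNat.mul hp.pos.ne' (Nat.factorial_ne_zero _), hz,
      padicValNat.self hp.one_lt]
  -- v(m!) = v(m) + v((m-1)!)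
  have h4 : padicValNat p m.factorial
      = padicValNat p m + padicValNat p (m - 1).factorial := by
    rw [← Nat.mul_factorial_pred (by omega : m ≠ 0),
      padicValNat.mul (by omega) (Nat.factorial_ne_zero _)]
  -- combine via C(d,p) * p! * (d-p)! = d!
  have key : d.choose p * p.factorial * (d - p).factorial = d.factorial :=
    Nat.choose_mul_factorial_mul_factorial hd
  have h5 : padicValNat p (d.choose p) + padicValNat p p.factorial
      + padicValNat p (d - p).factorial = padicValNat p d.factorial := by
    conv_rhs => rw [← key]
    rw [padicValNat.mul (Nat.mul_ne_zero (Nat.choose_pos hd).ne'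
        (Nat.factorial_ne_zero _)) (Nat.factorial_ne_zero _),
      padicValNat.mul (Nat.choose_pos hd).ne' (Nat.factorial_ne_zero _)]
  omega
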